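/- arXiv:1201.3498 — 3 statements merged into one kernel-verified Lean document; each statement's English description precedes it below -/
import Mathlib

section
/- In a priced game, if a strategy profile σ = (σ₁, σ₂) has no improving switches for either player, then σ₁ and σ₂ are both optimal strategies. -/
noncomputable section

open Classical
open scoped ENNReal

namespace PTGpaper

/-- A priced game: finitely many states partitioned between Player 1 (owner `0`,
the minimizer) and Player 2 (owner `1`, the maximizer), actions with nonnegative
(extended real) costs and destinations in the states or the terminal state
(modeled by `none`). -/
structure PricedGame where
  n : ℕ
  owner : Fin n → Fin 2
  A : Fin n → Finset ℕ
  cost : ℕ → ℝ≥0∞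
  dest : ℕ → Option (Fin n)

namespace PricedGame

variable (G : PricedGame)

/-- A positional strategy profile: a choice of an available action in each state. -/
def Valid (σ : Fin G.n → ℕ) : Prop :=
  ∀ k, σ k ∈ G.A k

def step (σ : Fin G.n → ℕ) (o : Option (Fin G.n)) : Option (Fin G.n) :=
  o.bind fun k => G.dest (σ k)

/-- The state reached after `t` steps of the path `P_{k,σ}` (`none` = terminal). -/
def reach (σ : Fin G.n → ℕ) (k : Fin G.n) (t : ℕ) : Option (Fin G.n) :=
  (G.step σ)^[t] (some k)

/-- The path from `k` under `σ` reaches the terminal state `⊥`. -/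
def Terminates (σ : Fin G.n → ℕ) (k : Fin G.n) : Prop :=
  ∃ t, G.reach σ k t = none

/-- Payoff `u(k,σ)`: total cost of the path from `k` to `⊥`, or `∞` if `⊥` is unreached. -/
def payoff (σ : Fin G.n → ℕ) (k : Fin G.n) : ℝ≥0∞ :=
  if G.Terminates σ k then
    ∑' t : ℕ, (G.reach σ k t).elim 0 (fun k' => G.cost (σ k'))
  else ⊤

/-- Length `ℓ(k,σ)` of the path from `k` to `⊥` (`⊤` if `⊥` is unreached). -/
def len (σ : Fin G.n → ℕ) (k : Fin G.n) : ℕ∞ :=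
  ⨅ (t : ℕ) (_ : G.reach σ k t = none), (t : ℕ∞)

def payoffO (σ : Fin G.n → ℕ) (o : Option (Fin G.n)) : ℝ≥0∞ :=
  o.elim 0 (G.payoff σ)

def lenO (σ : Fin G.n → ℕ) (o : Option (Fin G.n)) : ℕ∞ :=
  o.elim 0 (G.len σ)

/-- The valuation `ν(k,σ) = (u(k,σ), ℓ(k,σ))`, ordered lexicographically. -/
def valn (σ : Fin G.n → ℕ) (k : Fin G.n) : ℝ≥0∞ ×ₗ ℕ∞ :=
  toLex (G.payoff σ k, G.len σ k)

/-- The valuation obtained by first using action `j` and then following `σ`. -/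
def cand (σ : Fin G.n → ℕ) (j : ℕ) : ℝ≥0∞ ×ₗ ℕ∞ :=
  toLex (G.cost j + G.payoffO σ (G.dest j), 1 + G.lenO σ (G.dest j))

/-- `j ∈ A k` is an improving switch for Player 1 (the minimizer) at `k` w.r.t. `σ`. -/
def Improving1 (σ : Fin G.n → ℕ) (k : Fin G.n) (j : ℕ) : Prop :=
  j ∈ G.A k ∧ G.cand σ j < G.valn σ k

/-- `j ∈ A k` is an improving switch for Player 2 (the maximizer) at `k` w.r.t. `σ`. -/
def Improving2 (σ : Fin G.n → ℕ) (k : Fin G.n) (j : ℕ) : Prop :=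
  j ∈ G.A k ∧ G.valn σ k < G.cand σ j

/-- Strongly improving switch for Player 1: strictly smaller payoff. -/
def StronglyImproving1 (σ : Fin G.n → ℕ) (k : Fin G.n) (j : ℕ) : Prop :=
  j ∈ G.A k ∧ G.cost j + G.payoffO σ (G.dest j) < G.payoff σ k

/-- Strongly improving switch for Player 2: strictly larger payoff. -/
def StronglyImproving2 (σ : Fin G.n → ℕ) (k : Fin G.n) (j : ℕ) : Prop :=
  j ∈ G.A k ∧ G.payoff σ k < G.cost j + G.payoffO σ (G.dest j)

/-- Combine a Player 1 strategy and a Player 2 strategy into a profile. -/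
def combine (σ₁ σ₂ : Fin G.n → ℕ) (k : Fin G.n) : ℕ :=
  if G.owner k = 0 then σ₁ k else σ₂ k

/-- The upper value `min_{σ₁} max_{σ₂} u(k,σ₁,σ₂)`. -/
def upperVal (k : Fin G.n) : ℝ≥0∞ :=
  ⨅ σ₁ : {σ : Fin G.n → ℕ // G.Valid σ}, ⨆ σ₂ : {σ : Fin G.n → ℕ // G.Valid σ},
    G.payoff (G.combine σ₁ σ₂) k

/-- The lower value `max_{σ₂} min_{σ₁} u(k,σ₁,σ₂)`. -/
def lowerVal (k : Fin G.n) : ℝ≥0∞ :=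
  ⨆ σ₂ : {σ : Fin G.n → ℕ // G.Valid σ}, ⨅ σ₁ : {σ : Fin G.n → ℕ // G.Valid σ},
    G.payoff (G.combine σ₁ σ₂) k

/-- `σ₁` is a best response of Player 1 to `σ₂`: it minimizes the payoff at every state. -/
def BestResponse1 (σ₁ σ₂ : Fin G.n → ℕ) : Prop :=
  G.Valid σ₁ ∧ ∀ σ₁' : Fin G.n → ℕ, G.Valid σ₁' →
    ∀ k, G.payoff (G.combine σ₁ σ₂) k ≤ G.payoff (G.combine σ₁' σ₂) k

/-- `σ₂` is a best response of Player 2 to `σ₁`: it maximizes the payoff at every state. -/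
def BestResponse2 (σ₁ σ₂ : Fin G.n → ℕ) : Prop :=
  G.Valid σ₂ ∧ ∀ σ₂' : Fin G.n → ℕ, G.Valid σ₂' →
    ∀ k, G.payoff (G.combine σ₁ σ₂') k ≤ G.payoff (G.combine σ₁ σ₂) k

/-- `σ₁` is an optimal Player 1 strategy: it attains the upper value at every state. -/
def Optimal1 (σ₁ : Fin G.n → ℕ) : Prop :=
  G.Valid σ₁ ∧ ∀ k,
    (⨆ σ₂ : {σ : Fin G.n → ℕ // G.Valid σ}, G.payoff (G.combine σ₁ σ₂) k) = G.upperVal k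

/-- `σ₂` is an optimal Player 2 strategy: it attains the lower value at every state. -/
def Optimal2 (σ₂ : Fin G.n → ℕ) : Prop :=
  G.Valid σ₂ ∧ ∀ k,
    (⨅ σ₁ : {σ : Fin G.n → ℕ // G.Valid σ}, G.payoff (G.combine σ₁ σ₂) k) = G.lowerVal k

/-- `σ[B]`: switch `σ` to the actions prescribed by the partial assignment `β`
(at most one action per state). -/
def switch (σ : Fin G.n → ℕ) (β : Fin G.n → Option ℕ) (k : Fin G.n) : ℕ :=
  (β k).getD (σ k)

/-- `β` represents an improving set `B` for Player 1: it contains at least one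
improving switch for Player 1 and no improving switch for Player 2. -/
def ImprovingSet1 (σ : Fin G.n → ℕ) (β : Fin G.n → Option ℕ) : Prop :=
  (∀ k j, β k = some j → j ∈ G.A k) ∧
  (∃ k j, β k = some j ∧ G.Improving1 σ k j) ∧
  (∀ k j, β k = some j → ¬ G.Improving2 σ k j)

/-- `β` represents an improving set `B` for Player 2. -/
def ImprovingSet2 (σ : Fin G.n → ℕ) (β : Fin G.n → Option ℕ) : Prop :=
  (∀ k j, β k = some j → j ∈ G.A k) ∧
  (∃ k j, β k = some j ∧ G.Improving2 σ k j) ∧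
  (∀ k j, β k = some j → ¬ G.Improving1 σ k j)

end PricedGame

end PTGpaper

namespace PTGpaper

open PricedGame

namespace PricedGame

variable (G : PricedGame) (σ : Fin G.n → ℕ)

lemma reach_zero (k : Fin G.n) : G.reach σ k 0 = some k := rfl

lemma reach_succ_none {k : Fin G.n} (h : G.dest (σ k) = none) (t : ℕ) :
    G.reach σ k (t + 1) = none := by
  have h0 : G.reach σ k 1 = none := by
    simp [reach, step, h]
  induction t with
  | zero => exact h0
  | succ t ih =>
      have : G.reach σ k (t + 2) = G.step σ (G.reach σ k (t+1)) :=
        Function.iterate_succ_apply' _ _ _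
      rw [this, ih]; rfl

lemma reach_succ_some {k k' : Fin G.n} (h : G.dest (σ k) = some k') (t : ℕ) :
    G.reach σ k (t + 1) = G.reach σ k' t := by
  show (G.step σ)^[t+1] (some k) = (G.step σ)^[t] (some k')
  have hs : G.step σ (some k) = some k' := by simp [step, h]
  rw [Function.iterate_succ_apply, hs]

lemma terminates_of_dest_none {k : Fin G.n} (h : G.dest (σ k) = none) :
    G.Terminates σ k := ⟨1, G.reach_succ_none σ h 0⟩

lemma terminates_iff_of_dest_some {k k' : Fin G.n} (h : G.dest (σ k) = some k') :
    G.Terminates σ k ↔ G.Terminates σ k' := by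
  constructor
  · rintro ⟨t, ht⟩
    cases t with
    | zero => rw [reach_zero] at ht; cases ht
    | succ t => exact ⟨t, by rwa [G.reach_succ_some σ h] at ht⟩
  · rintro ⟨t, ht⟩
    exact ⟨t + 1, by rwa [G.reach_succ_some σ h]⟩

lemma payoff_rec (k : Fin G.n) :
    G.payoff σ k = G.cost (σ k) + G.payoffO σ (G.dest (σ k)) := by
  cases hd : G.dest (σ k) with
  | none =>
      have hT : G.Terminates σ k := G.terminates_of_dest_none σ hd
      rw [payoff, if_pos hT, tsum_eq_zero_add' ENNReal.summable]
      have h1 : ∀ n : ℕ, (G.reach σ k (n+1)).elim (0:ℝ≥0∞) (fun k' => G.cost (σ k')) = 0 := by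
        intro n; rw [G.reach_succ_none σ hd]; rfl
      rw [tsum_congr h1, tsum_zero]
      rfl
  | some k' =>
      by_cases hT' : G.Terminates σ k'
      · have hT : G.Terminates σ k := (G.terminates_iff_of_dest_some σ hd).mpr hT'
        rw [payoff, if_pos hT, tsum_eq_zero_add' ENNReal.summable]
        have h1 : ∀ n : ℕ, (G.reach σ k (n+1)).elim (0:ℝ≥0∞) (fun m => G.cost (σ m))
            = (G.reach σ k' n).elim (0:ℝ≥0∞) (fun m => G.cost (σ m)) := by
          intro n; rw [G.reach_succ_some σ hd]
        rw [tsum_congr h1]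
        have : G.payoffO σ (some k') = G.payoff σ k' := rfl
        rw [this, payoff, if_pos hT']
        rfl
      · have hT : ¬ G.Terminates σ k := fun h => hT' ((G.terminates_iff_of_dest_some σ hd).mp h)
        rw [payoff, if_neg hT]
        have : G.payoffO σ (some k') = G.payoff σ k' := rfl
        rw [this, payoff, if_neg hT', add_top]

lemma len_of_not_terminates {k : Fin G.n} (h : ¬ G.Terminates σ k) : G.len σ k = ⊤ :=
  le_antisymm le_top (le_iInf fun t => le_iInf fun ht => absurd ⟨t, ht⟩ h)

lemma len_eq_find {k : Fin G.n} (h : G.Terminates σ k) :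
    G.len σ k = (Nat.find h : ℕ∞) := by
  refine le_antisymm ?_ ?_
  · exact iInf_le_of_le (Nat.find h) (iInf_le_of_le (Nat.find_spec h) le_rfl)
  · exact le_iInf fun t => le_iInf fun ht => by exact_mod_cast Nat.find_min' h ht

lemma len_ne_top {k : Fin G.n} (h : G.Terminates σ k) : G.len σ k ≠ ⊤ := by
  rw [G.len_eq_find σ h]; exact ENat.coe_ne_top _

lemma terminates_of_payoff_ne_top {k : Fin G.n} (h : G.payoff σ k ≠ ⊤) :
    G.Terminates σ k := by
  by_contra hT
  rw [payoff, if_neg hT] at h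
  exact h rfl

lemma len_rec (k : Fin G.n) : G.len σ k = 1 + G.lenO σ (G.dest (σ k)) := by
  cases hd : G.dest (σ k) with
  | none =>
      have hT : G.Terminates σ k := G.terminates_of_dest_none σ hd
      rw [G.len_eq_find σ hT]
      have : Nat.find hT = 1 := by
        refine (Nat.find_eq_iff hT).mpr ?_; beta_reduce
        refine ⟨G.reach_succ_none σ hd 0, ?_⟩
        intro n hn
        interval_cases n
        rw [reach_zero]; simp
      rw [this]
      rfl
  | some k' =>
      by_cases hT' : G.Terminates σ k'
      · have hT : G.Terminates σ k := (G.terminates_iff_of_dest_some σ hd).mpr hT'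
        rw [G.len_eq_find σ hT]
        have hfind : Nat.find hT = Nat.find hT' + 1 := by
          refine (Nat.find_eq_iff hT).mpr ?_; beta_reduce
          constructor
          · rw [G.reach_succ_some σ hd]; exact Nat.find_spec hT'
          · intro n hn
            cases n with
            | zero => rw [reach_zero]; simp
            | succ m =>
                rw [G.reach_succ_some σ hd]
                exact Nat.find_min hT' (by omega)
        rw [hfind]
        have : G.lenO σ (some k') = G.len σ k' := rfl
        rw [this, G.len_eq_find σ hT']
        push_cast
        ring
      · have hT : ¬ G.Terminates σ k := fun h => hT' ((G.terminates_iff_of_dest_some σ hd).mp h)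
        rw [G.len_of_not_terminates σ hT]
        have : G.lenO σ (some k') = G.len σ k' := rfl
        rw [this, G.len_of_not_terminates σ hT', add_top]

lemma cand_self (k : Fin G.n) : G.cand σ (σ k) = G.valn σ k := by
  rw [cand, valn, ← G.payoff_rec σ k, ← G.len_rec σ k]


/-- Terminating-path half of the policy comparison: if from every state the action
prescribed by `τ` has payoff-candidate at most `payoff σ`, then along any terminating
`τ`-path, `payoff τ ≤ payoff σ`. -/
lemma payoff_le_aux (τ : Fin G.n → ℕ)
    (Hfst : ∀ m, G.cost (τ m) + G.payoffO σ (G.dest (τ m)) ≤ G.payoff σ m) :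
    ∀ t k, G.reach τ k t = none → G.payoff τ k ≤ G.payoff σ k := by
  intro t
  induction t with
  | zero => intro k h; rw [reach_zero] at h; cases h
  | succ t ih =>
      intro k h
      rw [G.payoff_rec τ k]
      cases hd : G.dest (τ k) with
      | none =>
          have h2 := Hfst k; rw [hd] at h2; exact h2
      | some k' =>
          have h' : G.reach τ k' t = none := by rwa [G.reach_succ_some τ hd] at h
          have h2 := Hfst k; rw [hd] at h2
          calc G.cost (τ k) + G.payoffO τ (some k')
              = G.cost (τ k) + G.payoff τ k' := rfl
            _ ≤ G.cost (τ k) + G.payoff σ k' := add_le_add le_rfl (ih k' h')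
            _ = G.cost (τ k) + G.payoffO σ (some k') := rfl
            _ ≤ G.payoff σ k := h2

/-- Non-terminating half: if the candidate valuation of `τ`'s action is lexicographically
at most `ν(·,σ)` everywhere, and the `τ`-path from `k` does not terminate, then
`payoff σ k = ⊤`. -/
lemma payoff_top_of_not_terminates (τ : Fin G.n → ℕ)
    (H : ∀ m, G.cand σ (τ m) ≤ G.valn σ m) {k : Fin G.n}
    (hT : ¬ G.Terminates τ k) : G.payoff σ k = ⊤ := by
  by_contra hne
  have hs' : ∀ t, ∃ m, G.reach τ k t = some m := by
    intro t
    cases h : G.reach τ k t with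
    | none => exact absurd ⟨t, h⟩ hT
    | some m => exact ⟨m, rfl⟩
  choose s hs using hs'
  have hs0 : s 0 = k := by
    have := hs 0; rw [reach_zero] at this; exact (Option.some_inj.mp this.symm)
  have hstep : ∀ t, G.dest (τ (s t)) = some (s (t+1)) := by
    intro t
    have h2 : G.reach τ k (t+1) = G.step τ (G.reach τ k t) :=
      Function.iterate_succ_apply' _ _ _
    rw [hs t, hs (t+1)] at h2
    simpa [step] using h2.symm
  have key : ∀ m m', G.dest (τ m) = some m' → G.payoff σ m ≠ ⊤ →
      G.payoff σ m' ≠ ⊤ ∧ G.valn σ m' < G.valn σ m := by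
    intro m m' hd hm
    have hle := H m
    rw [cand, hd] at hle
    have hpO : G.payoffO σ (some m') = G.payoff σ m' := rfl
    have hlO : G.lenO σ (some m') = G.len σ m' := rfl
    rw [hpO, hlO, valn] at hle
    have hlen_m : G.len σ m ≠ ⊤ := G.len_ne_top σ (G.terminates_of_payoff_ne_top σ hm)
    rcases Prod.Lex.le_iff.mp hle with hlt | ⟨heq, hlen⟩
    · have hp : G.payoff σ m' < G.payoff σ m := lt_of_le_of_lt le_add_self hlt
      refine ⟨?_, ?_⟩
      · intro htop; rw [htop] at hp; exact absurd (le_top.trans_lt hp) (lt_irrefl _)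
      · rw [valn, valn]; exact Prod.Lex.lt_iff.mpr (Or.inl hp)
    · have heq' : G.cost (τ m) + G.payoff σ m' = G.payoff σ m := heq
      have hp' : G.payoff σ m' ≤ G.payoff σ m := heq' ▸ le_add_self
      rcases hp'.lt_or_eq with hp | hp
      · refine ⟨?_, ?_⟩
        · intro htop; rw [htop] at hp; exact absurd (le_top.trans_lt hp) (lt_irrefl _)
        · rw [valn, valn]; exact Prod.Lex.lt_iff.mpr (Or.inl hp)
      · have hlen' : G.len σ m' < G.len σ m := by
          have hx : G.len σ m' ≠ ⊤ := by
            intro hxx; rw [hxx, add_top] at hlen; exact hlen_m (top_le_iff.mp hlen)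
          calc G.len σ m' < G.len σ m' + 1 := (ENat.lt_add_one_iff hx).mpr le_rfl
            _ = 1 + G.len σ m' := add_comm _ _
            _ ≤ G.len σ m := hlen
        refine ⟨hp ▸ hm, ?_⟩
        rw [valn, valn]; exact Prod.Lex.lt_iff.mpr (Or.inr ⟨hp, hlen'⟩)
  have hfin : ∀ t, G.payoff σ (s t) ≠ ⊤ := by
    intro t
    induction t with
    | zero => rw [hs0]; exact hne
    | succ t ih => exact (key _ _ (hstep t) ih).1
  have hmono : StrictAnti fun t => G.valn σ (s t) :=
    strictAnti_nat_of_succ_lt fun t => (key _ _ (hstep t) (hfin t)).2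
  obtain ⟨a, b, hab, he⟩ := Finite.exists_ne_map_eq_of_infinite s
  rcases hab.lt_or_gt with h | h
  · have h2 : G.valn σ (s b) < G.valn σ (s a) := hmono h
    rw [he] at h2
    exact absurd h2 (lt_irrefl _)
  · have h2 : G.valn σ (s a) < G.valn σ (s b) := hmono h
    rw [he] at h2
    exact absurd h2 (lt_irrefl _)

/-- If the candidate valuation of `τ`'s action is lexicographically at most `ν(·,σ)`
everywhere, then `payoff τ ≤ payoff σ` everywhere. -/
lemma payoff_le_of_cand_le (τ : Fin G.n → ℕ)
    (H : ∀ m, G.cand σ (τ m) ≤ G.valn σ m) (k : Fin G.n) :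
    G.payoff τ k ≤ G.payoff σ k := by
  have Hfst : ∀ m, G.cost (τ m) + G.payoffO σ (G.dest (τ m)) ≤ G.payoff σ m := by
    intro m
    have hle := H m
    rw [cand, valn] at hle
    rcases Prod.Lex.le_iff.mp hle with h | ⟨h, _⟩
    · exact h.le
    · exact le_of_eq h
  by_cases hT : G.Terminates τ k
  · obtain ⟨t, ht⟩ := hT
    exact G.payoff_le_aux σ τ Hfst t k ht
  · rw [G.payoff_top_of_not_terminates σ τ H hT]
    exact le_top

/-- If the candidate valuation of `τ`'s action is lexicographically at least `ν(·,σ)`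
everywhere, then `payoff σ ≤ payoff τ` everywhere. -/
lemma payoff_ge_of_cand_ge (τ : Fin G.n → ℕ)
    (H : ∀ m, G.valn σ m ≤ G.cand σ (τ m)) (k : Fin G.n) :
    G.payoff σ k ≤ G.payoff τ k := by
  have Hfst : ∀ m, G.payoff σ m ≤ G.cost (τ m) + G.payoffO σ (G.dest (τ m)) := by
    intro m
    have hle := H m
    rw [cand, valn] at hle
    rcases Prod.Lex.le_iff.mp hle with h | ⟨h, _⟩
    · exact h.le
    · exact le_of_eq h
  by_cases hT : G.Terminates τ k
  · obtain ⟨t, ht⟩ := hT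
    induction t generalizing k with
    | zero => rw [reach_zero] at ht; cases ht
    | succ t ih =>
        rw [G.payoff_rec τ k]
        cases hd : G.dest (τ k) with
        | none =>
            have h2 := Hfst k; rw [hd] at h2; exact h2
        | some k' =>
            have h' : G.reach τ k' t = none := by rwa [G.reach_succ_some τ hd] at ht
            have h2 := Hfst k; rw [hd] at h2
            calc G.payoff σ k ≤ G.cost (τ k) + G.payoffO σ (some k') := h2
              _ = G.cost (τ k) + G.payoff σ k' := rfl
              _ ≤ G.cost (τ k) + G.payoff τ k' := add_le_add le_rfl (ih k' h')
              _ = G.cost (τ k) + G.payoffO τ (some k') := rfl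
  · have : G.payoff τ k = ⊤ := by rw [payoff, if_neg hT]
    rw [this]
    exact le_top


lemma combine_self : G.combine σ σ = σ :=
  funext fun k => by rw [combine]; split <;> rfl

lemma payoff_combine_le (hσ : G.Valid σ)
    (h2 : ∀ k j, G.owner k = 1 → ¬ G.Improving2 σ k j)
    (σ₂' : Fin G.n → ℕ) (hv : G.Valid σ₂') (k : Fin G.n) :
    G.payoff (G.combine σ σ₂') k ≤ G.payoff σ k := by
  apply G.payoff_le_of_cand_le σ
  intro m
  by_cases hm : G.owner m = 0
  · rw [show G.combine σ σ₂' m = σ m from if_pos hm, G.cand_self σ m]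
  · have hm1 : G.owner m = 1 := by omega
    have hni := h2 m (σ₂' m) hm1
    have hnc : ¬ (G.valn σ m < G.cand σ (σ₂' m)) := fun hc => hni ⟨hv m, hc⟩
    rw [show G.combine σ σ₂' m = σ₂' m from if_neg hm]
    exact not_lt.mp hnc

lemma payoff_combine_ge (hσ : G.Valid σ)
    (h1 : ∀ k j, G.owner k = 0 → ¬ G.Improving1 σ k j)
    (σ₁' : Fin G.n → ℕ) (hv : G.Valid σ₁') (k : Fin G.n) :
    G.payoff σ k ≤ G.payoff (G.combine σ₁' σ) k := by
  apply G.payoff_ge_of_cand_ge σ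
  intro m
  by_cases hm : G.owner m = 0
  · have hni := h1 m (σ₁' m) hm
    have hnc : ¬ (G.cand σ (σ₁' m) < G.valn σ m) := fun hc => hni ⟨hv m, hc⟩
    rw [show G.combine σ₁' σ m = σ₁' m from if_pos hm]
    exact not_lt.mp hnc
  · rw [show G.combine σ₁' σ m = σ m from if_neg hm, G.cand_self σ m]

end PricedGame

/-- if neither player has an improving switch with respect to the
strategy profile `σ`, then `σ` is an optimal strategy for both players. -/
theorem no_improving_switch_implies_optimal (G : PricedGame) (σ : Fin G.n → ℕ)
    (hσ : G.Valid σ)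
    (h1 : ∀ k j, G.owner k = 0 → ¬ G.Improving1 σ k j)
    (h2 : ∀ k j, G.owner k = 1 → ¬ G.Improving2 σ k j) :
    G.Optimal1 σ ∧ G.Optimal2 σ := by
  have hA := G.payoff_combine_le σ hσ h2
  have hB := G.payoff_combine_ge σ hσ h1
  have hcs := G.combine_self σ
  constructor
  · refine ⟨hσ, fun k => ?_⟩
    have hsup : (⨆ σ₂ : {σ' : Fin G.n → ℕ // G.Valid σ'},
        G.payoff (G.combine σ σ₂) k) = G.payoff σ k := by
      apply le_antisymm
      · exact iSup_le fun σ₂ => hA σ₂.1 σ₂.2 k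
      · have := le_iSup (fun σ₂ : {σ' : Fin G.n → ℕ // G.Valid σ'} =>
          G.payoff (G.combine σ σ₂) k) ⟨σ, hσ⟩
        rwa [hcs] at this
    rw [hsup, upperVal]
    apply le_antisymm
    · exact le_iInf fun σ₁ => le_iSup_of_le ⟨σ, hσ⟩ (hB σ₁.1 σ₁.2 k)
    · exact iInf_le_of_le ⟨σ, hσ⟩ (iSup_le fun σ₂ => hA σ₂.1 σ₂.2 k)
  · refine ⟨hσ, fun k => ?_⟩
    have hinf : (⨅ σ₁ : {σ' : Fin G.n → ℕ // G.Valid σ'},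
        G.payoff (G.combine σ₁ σ) k) = G.payoff σ k := by
      apply le_antisymm
      · have := iInf_le (fun σ₁ : {σ' : Fin G.n → ℕ // G.Valid σ'} =>
          G.payoff (G.combine σ₁ σ) k) ⟨σ, hσ⟩
        rwa [hcs] at this
      · exact le_iInf fun σ₁ => hB σ₁.1 σ₁.2 k
    rw [hinf, lowerVal]
    apply le_antisymm
    · exact le_iSup_of_le ⟨σ, hσ⟩ (le_iInf fun σ₁ => hB σ₁.1 σ₁.2 k)
    · refine iSup_le fun σ₂ => iInf_le_of_le ⟨σ, hσ⟩ (hA σ₂.1 σ₂.2 k)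

end PTGpaper
end
end

section
/- In a priced game where Player 2 has no improving switches with respect to strategy profile σ, if Player 1 switches to a best response σ₁' against σ₂, then u(k, σ₁', σ₂) = u(k, σ) for all states k. Equivalently (as in the proof of Lemma 2 of the paper): if σ₁' is a best response to σ₂ and there existed a state k₀ with u(k₀, σ₁', σ₂) < u(k₀, σ), then along the path induced by (σ₁', σ₂) from k₀ there would be a Player-1 improving switch with respect to σ, a contradiction. -/
noncomputable section

open Classical
open scoped ENNReal

namespace PTGpaper

open PricedGame

namespace PricedGame

variable (G : PricedGame)

lemma reach_succ' (σ : Fin G.n → ℕ) (k : Fin G.n) (t : ℕ) :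
    G.reach σ k (t + 1) = (G.dest (σ k)).elim none (fun k' => G.reach σ k' t) := by
  cases h : G.dest (σ k) with
  | none =>
    have h0 : G.step σ (some k) = none := by simp [step, h]
    have : G.step σ none = none := rfl
    simp only [reach, Function.iterate_succ_apply, h0, Option.elim]
    exact Function.iterate_fixed this t
  | some k' =>
    have h0 : G.step σ (some k) = some k' := by simp [step, h]
    simp only [reach, Function.iterate_succ_apply, h0, Option.elim]

lemma payoff_eq_step (σ : Fin G.n → ℕ) (k : Fin G.n) :
    G.payoff σ k = G.cost (σ k) + G.payoffO σ (G.dest (σ k)) := by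
  have hsplit : ∀ f : ℕ → ℝ≥0∞, (∑' t : ℕ, f t) = f 0 + ∑' t : ℕ, f (t + 1) :=
    fun f => tsum_eq_zero_add' ENNReal.summable
  have h0 : G.reach σ k 0 = some k := rfl
  cases h : G.dest (σ k) with
  | none =>
    have hterm : G.Terminates σ k := ⟨1, by rw [G.reach_succ' σ k 0, h]; rfl⟩
    have hr : ∀ t, G.reach σ k (t + 1) = none := fun t => by
      rw [G.reach_succ' σ k t, h]; rfl
    rw [payoff, if_pos hterm,
      hsplit fun t => (G.reach σ k t).elim 0 fun k' => G.cost (σ k')]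
    simp [h0, hr, payoffO, h]
  | some k' =>
    have hr : ∀ t, G.reach σ k (t + 1) = G.reach σ k' t := fun t => by
      rw [G.reach_succ' σ k t, h]; rfl
    have hiff : G.Terminates σ k ↔ G.Terminates σ k' := by
      constructor
      · rintro ⟨t, ht⟩
        cases t with
        | zero => rw [h0] at ht; exact absurd ht (by simp)
        | succ s => exact ⟨s, by rw [← hr s]; exact ht⟩
      · rintro ⟨t, ht⟩
        exact ⟨t + 1, by rw [hr t]; exact ht⟩
    by_cases hterm : G.Terminates σ k
    · rw [payoff, if_pos hterm,
        hsplit fun t => (G.reach σ k t).elim 0 fun k'' => G.cost (σ k'')]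
      have : (∑' t : ℕ, (G.reach σ k (t + 1)).elim 0 fun k'' => G.cost (σ k''))
          = G.payoff σ k' := by
        rw [payoff, if_pos (hiff.mp hterm)]
        exact tsum_congr fun t => by rw [hr t]
      rw [this, h0]
      simp [payoffO, h]
    · rw [payoff, if_neg hterm]
      have : G.payoffO σ (some k') = ⊤ := by
        rw [payoffO, Option.elim, payoff, if_neg (fun hc => hterm (hiff.mpr hc))]
      rw [this, add_top]

end PricedGame

/-- if Player 1 has no improving switches with respect to `σ = (σ₁,σ₂)`
(so that, as in the proof of Lemma 2, a state `k₀` with `u(k₀,σ₁',σ₂) < u(k₀,σ)` would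
give a Player-1 improving switch along the induced path, a contradiction), then any
best response `σ₁'` to `σ₂` yields the same payoff as `σ` at every state. -/
theorem best_response_payoff_eq (G : PricedGame) (σ₁ σ₂ σ₁' : Fin G.n → ℕ)
    (hσ₁ : G.Valid σ₁) (hσ₂ : G.Valid σ₂)
    (h1 : ∀ k j, G.owner k = 0 → ¬ G.Improving1 (G.combine σ₁ σ₂) k j)
    (hbr : G.BestResponse1 σ₁' σ₂) :
    ∀ k, G.payoff (G.combine σ₁' σ₂) k = G.payoff (G.combine σ₁ σ₂) k := by
  set σ := G.combine σ₁ σ₂ with hσ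
  set τ := G.combine σ₁' σ₂ with hτ
  -- key local inequality
  have key : ∀ k, G.payoff σ k ≤ G.cost (τ k) + G.payoffO σ (G.dest (τ k)) := by
    intro k
    by_cases ho : G.owner k = 0
    · have hA : τ k ∈ G.A k := by
        have := hbr.1 k
        simpa [hτ, combine, ho] using this
      have hni := h1 k (τ k) ho
      rw [Improving1, not_and] at hni
      have hle : G.valn σ k ≤ G.cand σ (τ k) := not_lt.mp (hni hA)
      rw [valn, cand, Prod.Lex.le_iff] at hle
      rcases hle with h | ⟨h, _⟩
      · exact le_of_lt h
      · exact le_of_eq h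
    · have hτσ : τ k = σ k := by simp [hτ, hσ, combine, ho]
      rw [hτσ, ← G.payoff_eq_step σ k]
  have main : ∀ t k, G.reach τ k t = none → G.payoff σ k ≤ G.payoff τ k := by
    intro t
    induction t with
    | zero =>
      intro k h
      exact absurd h (by simp [reach])
    | succ s ih =>
      intro k h
      rw [G.payoff_eq_step τ k]
      refine (key k).trans (add_le_add le_rfl ?_)
      cases hd : G.dest (τ k) with
      | none => simp [payoffO]
      | some k' =>
        have hr : G.reach τ k' s = none := by
          rw [G.reach_succ' τ k s, hd] at h
          exact h
        simpa [payoffO] using ih k' hr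
  intro k
  refine le_antisymm (hbr.2 σ₁ hσ₁ k) ?_
  by_cases ht : G.Terminates τ k
  · obtain ⟨t, hr⟩ := ht
    exact main t k hr
  · have : G.payoff τ k = ⊤ := by rw [payoff, if_neg ht]
    rw [this]
    exact le_top

end PTGpaper
end
end

section
/- In a priced game where no improving switches exist for Player 1 with respect to σ = (σ₁, σ₂), and all action costs are nonnegative, if Player 2 deviates to a strategy σ₂' such that the path induced by (σ₁, σ₂') from some state k₀ is infinite (ends in a cycle) while u(k₀, σ) is finite, then a contradiction arises: along the infinite path, the valuations ν(kᵢ, σ) strictly decrease at every step, which is impossible along a cycle. -/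
noncomputable section

open Classical
open scoped ENNReal

namespace PTGpaper

open PricedGame

section Aux

variable (G : PricedGame)

lemma reach_succ' (σ : Fin G.n → ℕ) (k k' : Fin G.n) (t : ℕ)
    (h : G.dest (σ k) = some k') : G.reach σ k (t+1) = G.reach σ k' t := by
  simp [PricedGame.reach, Function.iterate_succ_apply, PricedGame.step, h]

lemma reach_zero (σ : Fin G.n → ℕ) (k : Fin G.n) : G.reach σ k 0 = some k := rfl

lemma terminates_succ (σ : Fin G.n → ℕ) (k k' : Fin G.n)
    (h : G.dest (σ k) = some k') (ht : G.Terminates σ k) : G.Terminates σ k' := by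
  obtain ⟨t, ht⟩ := ht
  cases t with
  | zero => simp [reach_zero] at ht
  | succ s => exact ⟨s, by rw [← reach_succ' G σ k k' s h]; exact ht⟩

lemma terminates_of_ne_top (σ : Fin G.n → ℕ) (k : Fin G.n)
    (h : G.payoff σ k ≠ ⊤) : G.Terminates σ k := by
  by_contra hc
  exact h (by rw [PricedGame.payoff, if_neg hc])

lemma len_ne_top (σ : Fin G.n → ℕ) (k : Fin G.n) (ht : G.Terminates σ k) :
    G.len σ k ≠ ⊤ := by
  obtain ⟨t, ht⟩ := ht
  have h1 : G.len σ k ≤ (t : ℕ∞) := iInf₂_le t ht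
  exact (h1.trans_lt (WithTop.coe_lt_top t)).ne

lemma len_succ_le (σ : Fin G.n → ℕ) (k k' : Fin G.n)
    (h : G.dest (σ k) = some k') : G.len σ k' + 1 ≤ G.len σ k := by
  refine le_iInf₂ fun t ht => ?_
  cases t with
  | zero => simp [reach_zero] at ht
  | succ s =>
    rw [reach_succ' G σ k k' s h] at ht
    have h1 : G.len σ k' ≤ (s : ℕ∞) := iInf₂_le s ht
    calc G.len σ k' + 1 ≤ (s : ℕ∞) + 1 := add_le_add_left h1 1
    _ = ((s+1 : ℕ) : ℕ∞) := by push_cast; ring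

lemma payoff_succ (σ : Fin G.n → ℕ) (k k' : Fin G.n)
    (h : G.dest (σ k) = some k') (ht : G.Terminates σ k) :
    G.payoff σ k = G.cost (σ k) + G.payoff σ k' := by
  have ht' : G.Terminates σ k' := terminates_succ G σ k k' h ht
  rw [PricedGame.payoff, if_pos ht, PricedGame.payoff, if_pos ht',
    tsum_eq_zero_add' ENNReal.summable]
  congr 1
  exact tsum_congr fun t => by rw [reach_succ' G σ k k' t h]

lemma valn_lt (σ : Fin G.n → ℕ) (k k' : Fin G.n)
    (hp : G.payoff σ k' ≤ G.payoff σ k)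
    (hl : 1 + G.len σ k' ≤ G.len σ k)
    (htop : G.payoff σ k ≠ ⊤) : G.valn σ k' < G.valn σ k := by
  have hp'top : G.payoff σ k' ≠ ⊤ := fun h => htop (top_le_iff.mp (h ▸ hp))
  have hlt' : G.len σ k' ≠ ⊤ := len_ne_top G σ k' (terminates_of_ne_top G σ k' hp'top)
  rw [PricedGame.valn, PricedGame.valn, Prod.Lex.lt_iff]
  rcases hp.lt_or_eq with h | h
  · exact Or.inl h
  · refine Or.inr ⟨h, ?_⟩
    have h2 : G.len σ k' < 1 + G.len σ k' := by
      lift G.len σ k' to ℕ using hlt' with m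
      have hm : m < 1 + m := by omega
      exact_mod_cast hm
    exact h2.trans_le hl

/-- Key step: along the deviated path, valuations strictly decrease. -/
lemma key_step (σ₁ σ₂ σ₂' : Fin G.n → ℕ) (hσ₂' : G.Valid σ₂')
    (h2 : ∀ k j, G.owner k = 1 → ¬ G.Improving2 (G.combine σ₁ σ₂) k j)
    (k k' : Fin G.n) (hd : G.dest (G.combine σ₁ σ₂' k) = some k')
    (hfin : G.payoff (G.combine σ₁ σ₂) k ≠ ⊤) :
    G.payoff (G.combine σ₁ σ₂) k' ≠ ⊤ ∧
      G.valn (G.combine σ₁ σ₂) k' < G.valn (G.combine σ₁ σ₂) k := by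
  set σ := G.combine σ₁ σ₂ with hσ
  by_cases h0 : G.owner k = 0
  · -- Player 1 state: same action as σ
    have hds : G.dest (σ k) = some k' := by
      rw [hσ]; rw [PricedGame.combine, if_pos h0] at hd ⊢; exact hd
    have hrec : G.payoff σ k = G.cost (σ k) + G.payoff σ k' :=
      payoff_succ G σ k k' hds (terminates_of_ne_top G σ k hfin)
    have hp : G.payoff σ k' ≤ G.payoff σ k := by rw [hrec]; exact le_add_self
    refine ⟨fun h => hfin (by rw [hrec, h, add_top]), ?_⟩
    exact valn_lt G σ k k' hp (by rw [add_comm]; exact len_succ_le G σ k k' hds) hfin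
  · -- Player 2 state: no improving switches
    have h1 : G.owner k = 1 := Fin.eq_one_of_ne_zero _ h0
    have hj : G.combine σ₁ σ₂' k = σ₂' k := by rw [PricedGame.combine, if_neg h0]
    set j := σ₂' k with hjdef
    have hdj : G.dest j = some k' := by rw [← hj]; exact hd
    have hni : ¬ G.valn σ k < G.cand σ j :=
      fun hlt => h2 k j h1 ⟨hσ₂' k, hlt⟩
    have hle : G.cand σ j ≤ G.valn σ k := le_of_not_gt hni
    rw [PricedGame.cand, PricedGame.valn, PricedGame.payoffO, PricedGame.lenO, hdj,
      Option.elim_some, Prod.Lex.le_iff] at hle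
    have hp : G.payoff σ k' ≤ G.cost j + G.payoff σ k' := le_add_self
    rcases hle with hlt | ⟨heq, hlen⟩
    · have hplt : G.payoff σ k' < G.payoff σ k := hp.trans_lt hlt
      refine ⟨ne_top_of_lt hplt , ?_⟩
      · rw [PricedGame.valn, PricedGame.valn, Prod.Lex.lt_iff]
        exact Or.inl hplt
    · have hple : G.payoff σ k' ≤ G.payoff σ k := hp.trans_eq heq
      refine ⟨fun h => hfin (top_le_iff.mp (h ▸ hple)), ?_⟩
      exact valn_lt G σ k k' hple hlen hfin

end Aux

end PTGpaper

namespace PTGpaper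

open PricedGame

/-- if Player 2 has no improving switches with respect to `σ = (σ₁,σ₂)`
and `u(k₀,σ)` is finite, then no Player 2 deviation `σ₂'` can make the induced path
from `k₀` infinite: the path of `(σ₁,σ₂')` from `k₀` necessarily reaches the terminal
state (otherwise the valuations `ν(·,σ)` would strictly decrease along a cycle,
a contradiction). -/
theorem deviation_path_terminates (G : PricedGame) (σ₁ σ₂ σ₂' : Fin G.n → ℕ)
    (hσ₁ : G.Valid σ₁) (hσ₂ : G.Valid σ₂) (hσ₂' : G.Valid σ₂')
    (h2 : ∀ k j, G.owner k = 1 → ¬ G.Improving2 (G.combine σ₁ σ₂) k j)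
    (k₀ : Fin G.n) (hfin : G.payoff (G.combine σ₁ σ₂) k₀ ≠ ⊤) :
    G.Terminates (G.combine σ₁ σ₂') k₀ := by
  by_contra hterm
  set σ := G.combine σ₁ σ₂ with hσdef
  set τ := G.combine σ₁ σ₂' with hτdef
  have hex : ∀ t, ∃ k, G.reach τ k₀ t = some k := by
    intro t
    cases h : G.reach τ k₀ t with
    | none => exact absurd ⟨t, h⟩ hterm
    | some k => exact ⟨k, rfl⟩
  choose f hf using hex
  have hf0 : f 0 = k₀ := by
    have h := hf 0
    rw [reach_zero] at h
    exact (Option.some_injective _ h).symm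
  have hstep : ∀ t, G.dest (τ (f t)) = some (f (t+1)) := by
    intro t
    have h1 : G.reach τ k₀ (t+1) = G.step τ (G.reach τ k₀ t) :=
      Function.iterate_succ_apply' _ _ _
    rw [hf (t+1), hf t] at h1
    simpa [PricedGame.step] using h1.symm
  have hkey : ∀ t, G.payoff σ (f t) ≠ ⊤ →
      G.payoff σ (f (t+1)) ≠ ⊤ ∧ G.valn σ (f (t+1)) < G.valn σ (f t) := by
    intro t ht
    exact key_step G σ₁ σ₂ σ₂' hσ₂' h2 (f t) (f (t+1)) (hstep t) ht
  have hfin' : ∀ t, G.payoff σ (f t) ≠ ⊤ := by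
    intro t
    induction t with
    | zero => rw [hf0]; exact hfin
    | succ s ih => exact (hkey s ih).1
  have hdec : ∀ t, G.valn σ (f (t+1)) < G.valn σ (f t) := fun t => (hkey t (hfin' t)).2
  have hanti : StrictAnti (fun t => G.valn σ (f t)) := strictAnti_nat_of_succ_lt hdec
  have finj : Function.Injective f := fun a b hab => hanti.injective (by simp [hab])
  haveI := Finite.of_injective f finj
  exact not_finite ℕ


end PTGpaper
end
end
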